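/- Let d ≥ 2, n ≥ 1 and 1 ≤ r ≤ 2n be integers, and let a₁, …, a_r be linearly independent vectors in (Z_d)^{2n}, i.e., the only coefficients x₁, …, x_r ∈ Z_d with x₁a₁ + ⋯ + x_r a_r = 0 are x₁ = ⋯ = x_r = 0. Then for every index i ∈ {1, …, r} there exists a vector x ∈ (Z_d)^{2n} such that a_jᵀ Λ x = 1 if j = i and a_jᵀ Λ x = 0 for all j ≠ i. -/

import Mathlib

open Matrix

/-- The standard symplectic form `Λ = [[0, I], [-I, 0]]` over `ZMod d`. -/
def JJ (ι : Type) [Fintype ι] [DecidableEq ι] (d : ℕ) :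
    Matrix (ι ⊕ ι) (ι ⊕ ι) (ZMod d) :=
  Matrix.fromBlocks 0 1 (-1) 0

/-- The set of symplectic matrices: `Mᵀ Λ M = Λ`. -/
def SpSet (ι : Type) [Fintype ι] [DecidableEq ι] (d : ℕ) :
    Set (Matrix (ι ⊕ ι) (ι ⊕ ι) (ZMod d)) :=
  {M | Mᵀ * JJ ι d * M = JJ ι d}

lemma solve_mul (d : ℕ) [NeZero d] (m c : ZMod d)
    (h : ∀ t : ZMod d, t * m = 0 → t * c = 0) : ∃ e : ZMod d, e * m = c := by
  have hd : (d : ℤ) ≠ 0 := by exact_mod_cast (NeZero.ne d)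
  set M : ℤ := (m.val : ℤ) with hM
  set g : ℤ := (Int.gcd M d : ℤ) with hg
  have hgM : g ∣ M := Int.gcd_dvd_left M d
  have hgD : g ∣ (d : ℤ) := Int.gcd_dvd_right M d
  obtain ⟨t0, ht0⟩ := hgD
  have hg0 : g ≠ 0 := by
    intro h0; rw [h0, zero_mul] at ht0; exact hd ht0
  have ht0ne : t0 ≠ 0 := by rintro rfl; rw [mul_zero] at ht0; exact hd ht0
  have hmcast : ((M : ZMod d)) = m := by
    rw [hM]; push_cast [ZMod.natCast_val]; simp [ZMod.cast_id]
  -- t0 * m = 0 in ZMod d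
  have h1 : ((t0 : ZMod d)) * m = 0 := by
    rw [← hmcast, ← Int.cast_mul]
    rw [ZMod.intCast_zmod_eq_zero_iff_dvd]
    obtain ⟨M', hM'⟩ := hgM
    refine ⟨M', ?_⟩
    rw [ht0, hM']; ring
  have h2 := h _ h1
  -- d ∣ t0 * c.val
  have h3 : (d : ℤ) ∣ t0 * (c.val : ℤ) := by
    rw [← ZMod.intCast_zmod_eq_zero_iff_dvd]
    push_cast
    rw [ZMod.natCast_val, ZMod.cast_id]; exact_mod_cast h2
  -- hence g ∣ c.val
  have h4 : g ∣ (c.val : ℤ) := by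
    obtain ⟨k, hk⟩ := h3
    rw [ht0] at hk
    have : t0 * (c.val : ℤ) = t0 * (g * k) := by rw [hk]; ring
    have := mul_left_cancel₀ ht0ne this
    exact ⟨k, this⟩
  obtain ⟨k, hk⟩ := h4
  refine ⟨((Int.gcdA M d * k : ℤ) : ZMod d), ?_⟩
  have key : (Int.gcdA M d * k) * M - (c.val : ℤ) = (d : ℤ) * (-(Int.gcdB M d) * k) := by
    have := Int.gcd_eq_gcd_ab M d
    rw [hk]
    have hgeq : (g : ℤ) = M * Int.gcdA M d + d * Int.gcdB M d := this
    rw [hgeq]; ring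
  have : (((Int.gcdA M d * k) * M - (c.val : ℤ) : ℤ) : ZMod d) = 0 := by
    rw [key]; push_cast; simp
  rw [← hmcast]
  push_cast [ZMod.natCast_val, ZMod.cast_id] at this ⊢
  linear_combination this

lemma zmod_ideal_principal (d : ℕ) (I : Ideal (ZMod d)) : ∃ m : ZMod d, I = Ideal.span {m} := by
  obtain ⟨m, hm⟩ := (IsPrincipalIdealRing.principal (I.comap (Int.castRingHom (ZMod d)))).principal
  refine ⟨(m : ZMod d), ?_⟩
  have h1 : I = Ideal.map (Int.castRingHom (ZMod d)) (I.comap (Int.castRingHom (ZMod d))) :=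
    (Ideal.map_comap_of_surjective _ ZMod.intCast_surjective I).symm
  rw [h1, hm]
  show Ideal.map (Int.castRingHom (ZMod d)) (Ideal.span {m}) = Ideal.span {(m : ZMod d)}
  rw [Ideal.map_span, Set.image_singleton]; rfl

lemma baer_zmod (d : ℕ) [NeZero d] : Module.Baer (ZMod d) (ZMod d) := by
  intro I g
  obtain ⟨m, rfl⟩ := zmod_ideal_principal d I
  have hmem : m ∈ Ideal.span ({m} : Set (ZMod d)) := Ideal.mem_span_singleton_self m
  set c : ZMod d := g ⟨m, hmem⟩ with hc
  have hann : ∀ t : ZMod d, t * m = 0 → t * c = 0 := by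
    intro t ht
    have : (⟨t * m, Ideal.mul_mem_left _ t hmem⟩ : Ideal.span ({m} : Set (ZMod d)))
        = t • ⟨m, hmem⟩ := by ext; simp
    calc t * c = g (t • ⟨m, hmem⟩) := by rw [_root_.map_smul]; simp [hc, smul_eq_mul]
    _ = g ⟨t * m, _⟩ := by rw [← this]
    _ = 0 := by
        have h0 : (⟨t * m, Ideal.mul_mem_left _ t hmem⟩ : Ideal.span ({m} : Set (ZMod d))) = 0 :=
          Subtype.ext ht
        rw [h0, map_zero]
  obtain ⟨e, he⟩ := solve_mul d m c hann
  refine ⟨LinearMap.toSpanSingleton (ZMod d) (ZMod d) e, ?_⟩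
  intro x hx
  obtain ⟨t, rfl⟩ := Ideal.mem_span_singleton'.mp hx
  have : (⟨t * m, hx⟩ : Ideal.span ({m} : Set (ZMod d))) = t • ⟨m, hmem⟩ := by ext; simp
  rw [this, _root_.map_smul]
  simp only [LinearMap.toSpanSingleton_apply, smul_eq_mul, ← hc, ← he]
  ring

theorem stmt_18 (d n r : ℕ) (hd : 2 ≤ d) (hn : 1 ≤ n) (hr1 : 1 ≤ r) (hr2 : r ≤ 2 * n)
    (a : Fin r → (Fin n ⊕ Fin n → ZMod d))
    (hLI : ∀ x : Fin r → ZMod d, ∑ i, x i • a i = 0 → ∀ i, x i = 0) :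
    ∀ i : Fin r, ∃ x : Fin n ⊕ Fin n → ZMod d,
      ∀ j : Fin r, a j ⬝ᵥ (JJ (Fin n) d).mulVec x = if j = i then 1 else 0 := by
  intro i
  haveI : NeZero d := ⟨by omega⟩
  -- the linear map x ↦ ∑ x j • a j
  set A : (Fin r → ZMod d) →ₗ[ZMod d] (Fin n ⊕ Fin n → ZMod d) :=
    { toFun := fun x => ∑ j, x j • a j
      map_add' := by intro x y; simp [add_smul, Finset.sum_add_distrib]
      map_smul' := by intro c x; simp [smul_smul, Finset.mul_sum, Finset.smul_sum] } with hA
  have hAinj : Function.Injective A := by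
    rw [injective_iff_map_eq_zero]
    intro x hx
    funext j
    exact hLI x hx j
  set f : (Fin r → ZMod d) →ₗ[ZMod d] ZMod d := LinearMap.proj i with hf
  obtain ⟨ψ, hψ⟩ := (baer_zmod d).extension_property A hAinj f
  have hψa : ∀ j : Fin r, ψ (a j) = if j = i then 1 else 0 := by
    intro j
    have h1 : A (Pi.single j 1) = a j := by
      simp only [hA, LinearMap.coe_mk, AddHom.coe_mk]
      rw [Finset.sum_eq_single j]
      · simp
      · intro k _ hk; simp [Pi.single_apply, hk.symm]
      · simp
    have h2 : ψ (A (Pi.single j 1)) = f (Pi.single j 1) := by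
      rw [← LinearMap.comp_apply, hψ]
    rw [h1] at h2
    rw [h2, hf]
    simp [Pi.single_apply, eq_comm]
  set y : Fin n ⊕ Fin n → ZMod d := fun k => ψ (Pi.single k 1) with hy
  have hdot : ∀ z : Fin n ⊕ Fin n → ZMod d, z ⬝ᵥ y = ψ z := by
    intro z
    have hz : z = ∑ k, z k • (Pi.single k (1 : ZMod d) : Fin n ⊕ Fin n → ZMod d) := by
      conv_lhs => rw [← Finset.univ_sum_single z]
      congr 1; funext k
      rw [← Pi.single_smul, smul_eq_mul, mul_one]
    conv_rhs => rw [hz]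
    rw [map_sum]
    simp only [_root_.map_smul, smul_eq_mul]
    rfl
  -- invert JJ
  have hJJ : JJ (Fin n) d * (-(JJ (Fin n) d)) = 1 := by
    simp only [JJ, Matrix.fromBlocks_neg, Matrix.mul_neg]
    rw [Matrix.fromBlocks_multiply]
    simp [← Matrix.fromBlocks_one]
  refine ⟨(-(JJ (Fin n) d)).mulVec y, fun j => ?_⟩
  rw [Matrix.mulVec_mulVec, hJJ, Matrix.one_mulVec, hdot, hψa]
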